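/- Let k be a perfect field of characteristic p > 0, let d ≥ 1 and let n_1, …, n_s ∈ ℤ^d. Let S = { m ∈ ℤ^d : ⟨m, n_i⟩ ≥ 0 for i = 1, …, s } (the submonoid of lattice points of a rational polyhedral cone), and let A = k[S] be the monoid algebra of S over k. Then A is F-pure: for every integer e ≥ 1 the element 1 admits a p^e-splitting in A. -/

import Mathlib

/-- `c` admits a `p^e`-splitting in `A`: there is an additive map `φ : A → A` with
`φ (a^(p^e) * b) = a * φ b` for all `a b` and `φ c = 1`. -/
def AdmitsSplitting (p e : ℕ) {A : Type*} [CommRing A] (c : A) : Prop :=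
  ∃ φ : A →+ A, (∀ a b : A, φ (a ^ p ^ e * b) = a * φ b) ∧ φ c = 1

/-- The submonoid of lattice points of the rational polyhedral cone
`{m : ℤ^d | ⟨m, nᵢ⟩ ≥ 0 for all i}`. -/
def coneMonoid {d s : ℕ} (n : Fin s → Fin d → ℤ) : AddSubmonoid (Fin d → ℤ) where
  carrier := {m | ∀ i, 0 ≤ ∑ j, m j * n i j}
  zero_mem' := by intro i; simp
  add_mem' := by
    intro a b ha hb i
    have h := add_nonneg (ha i) (hb i)
    simpa [add_mul, Finset.sum_add_distrib] using h

section aux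

variable {d s : ℕ} (n : Fin s → Fin d → ℤ) (q : ℕ) (hq : 0 < q)

/-- divisibility predicate -/
def Dvble (m : coneMonoid n) : Prop := ∀ j, (q : ℤ) ∣ (m : Fin d → ℤ) j

instance (m : coneMonoid n) : Decidable (Dvble n q m) := by
  unfold Dvble; infer_instance

/-- halved element -/
def halfFun (m : coneMonoid n) : Fin d → ℤ := fun j => (m : Fin d → ℤ) j / q

theorem halfFun_mem (m : coneMonoid n) (hm : Dvble n q m) (hq : 0 < q) :
    halfFun n q m ∈ coneMonoid n := by
  intro i
  have h := m.2 i
  have key : (q : ℤ) * ∑ j, halfFun n q m j * n i j = ∑ j, (m : Fin d → ℤ) j * n i j := by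
    rw [Finset.mul_sum]
    refine Finset.sum_congr rfl fun j _ => ?_
    obtain ⟨c, hc⟩ := hm j
    rw [halfFun, hc, Int.mul_ediv_cancel_left _ (by exact_mod_cast hq.ne')]
    ring
  have hqpos : (0 : ℤ) < q := by exact_mod_cast hq
  nlinarith [key, h]

theorem smul_add_dvble (m m' : coneMonoid n) (hq : 0 < q) :
    Dvble n q (q • m + m') ↔ Dvble n q m' := by
  have hcoe : ∀ j, ((q • m + m' : coneMonoid n) : Fin d → ℤ) j
      = (q : ℤ) * (m : Fin d → ℤ) j + (m' : Fin d → ℤ) j := by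
    intro j
    have h1 : ((q • m : coneMonoid n) : Fin d → ℤ) = q • (m : Fin d → ℤ) := rfl
    simp [h1, Pi.smul_apply, nsmul_eq_mul]
  have hdvd : ∀ j, (q : ℤ) ∣ (q : ℤ) * (m : Fin d → ℤ) j := fun j => Dvd.intro _ rfl
  constructor <;> intro h j <;> have hj := h j
  · rw [hcoe j, dvd_add_right (hdvd j)] at hj; exact hj
  · rw [hcoe j, dvd_add_right (hdvd j)]; exact hj

end aux

theorem stmt_5 (p : ℕ) (hp : p.Prime) (k : Type*) [Field k] [CharP k p]
    [ExpChar k p] [PerfectRing k p]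
    (d s : ℕ) (hd : 1 ≤ d) (n : Fin s → Fin d → ℤ) :
    ∀ e : ℕ, 1 ≤ e → AdmitsSplitting p e (1 : AddMonoidAlgebra k (coneMonoid n)) := by
  intro e he
  set S := coneMonoid n
  set A := AddMonoidAlgebra k S with hA
  set q : ℕ := p ^ e with hqdef
  have hq : 0 < q := pow_pos hp.pos e
  haveI : CharP A p := charP_of_injective_algebraMap' k p
  haveI : ExpChar A p := .prime hp
  let ρ : k ≃+* k := (iterateFrobeniusEquiv k p e).symm
  have hρ : ∀ c : k, ρ (c ^ q) = c := fun c =>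
    (iterateFrobeniusEquiv k p e).symm_apply_apply c
  -- the splitting on single monomials
  let g : S → k →+ A := fun m =>
    if h : Dvble n q m then
      (AddMonoidAlgebra.singleAddHom (⟨halfFun n q m, halfFun_mem n q m h hq⟩ : S)).comp
        ρ.toAddMonoidHom
    else 0
  let φ : A →+ A := (Finsupp.liftAddHom (α := S) (M := k) (N := A) g).comp
    AddMonoidAlgebra.coeffAddEquiv.toAddMonoidHom
  have hsingle : ∀ (m : S) (c : k), φ (AddMonoidAlgebra.single m c) =
      if h : Dvble n q m then
        AddMonoidAlgebra.single (⟨halfFun n q m, halfFun_mem n q m h hq⟩ : S) (ρ c)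
      else 0 := by
    intro m c
    show Finsupp.liftAddHom g (Finsupp.single m c) = _
    rw [Finsupp.liftAddHom_apply_single]
    by_cases h : Dvble n q m <;> simp [g, h, AddMonoidAlgebra.singleAddHom]
  have key : ∀ (m : S) (c : k) (b : A),
      φ ((AddMonoidAlgebra.single m c) ^ q * b) = AddMonoidAlgebra.single m c * φ b := by
    intro m c b
    induction b using AddMonoidAlgebra.induction with
    | zero => simp
    | single_add m' c' f' _ _ ih' =>
        rw [mul_add, map_add, ih', map_add, mul_add]
        congr 1
        show φ ((AddMonoidAlgebra.single m c) ^ q * AddMonoidAlgebra.single m' c') = _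
        rw [AddMonoidAlgebra.single_pow, AddMonoidAlgebra.single_mul_single]
        rw [hsingle, hsingle]
        by_cases h : Dvble n q m'
        · rw [dif_pos ((smul_add_dvble n q m m' hq).2 h), dif_pos h]
          rw [AddMonoidAlgebra.single_mul_single]
          congr 1
          · ext j
            have hqne : (q : ℤ) ≠ 0 := by exact_mod_cast hq.ne'
            have h1 : ((q • m : S) : Fin d → ℤ) = q • (m : Fin d → ℤ) := rfl
            obtain ⟨c₁, hc₁⟩ := h j
            simp only [halfFun, AddSubmonoid.coe_add, Pi.add_apply, h1, Pi.smul_apply,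
              nsmul_eq_mul, Pi.mul_apply, Pi.natCast_apply, hc₁]
            rw [← mul_add, Int.mul_ediv_cancel_left _ hqne, Int.mul_ediv_cancel_left _ hqne]
          · rw [map_mul, hρ]
        · rw [dif_neg (fun hh => h ((smul_add_dvble n q m m' hq).1 hh)), dif_neg h, mul_zero]
  refine ⟨φ, ?_, ?_⟩
  · intro a b
    induction a using AddMonoidAlgebra.induction with
    | zero => simp [zero_pow (pow_pos hp.pos e).ne']
    | single_add m c f _ _ ih =>
      rw [add_pow_expChar_pow, add_mul, map_add, ih, add_mul]
      congr 1
      exact key m c b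
  · have h0 : Dvble n q (0 : S) := fun j => ⟨0, by simp⟩
    show φ (AddMonoidAlgebra.single (0 : S) (1 : k)) = 1
    rw [hsingle, dif_pos h0]
    have : (⟨halfFun n q (0 : S), halfFun_mem n q 0 h0 hq⟩ : S) = 0 := by
      ext j; simp [halfFun]
    rw [this, map_one]
    rfl
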